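/- (Strong maximum principle) Let n ≥ 1, s ∈ (0,1), 0 < λ ≤ Λ, let Ω ⊂ ℝⁿ be an open connected set, and let V ∈ L¹_loc(Ω) with V⁻ ∈ L^∞(Ω). Let u ∈ L¹_s(ℝⁿ) be lower semicontinuous on ℝⁿ with u ≥ 0 in all of ℝⁿ, and suppose 𝓜⁻[u] + V u ≤ 0 in Ω in the viscosity sense. Then either u > 0 everywhere in Ω or u ≡ 0 in Ω. -/

import Mathlib

open MeasureTheory Metric Set Filter RealInnerProductSpace

noncomputable section

/-- Euclidean space ℝⁿ. -/
abbrev Eu (n : ℕ) := EuclideanSpace ℝ (Fin n)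

/-- A kernel `μ` in the class `𝓛_*`: measurable, with values in `[λ, Λ]` on the unit
sphere, and even. -/
def IsAdmissibleKernel (n : ℕ) (lam Lam : ℝ) (μ : Eu n → ℝ) : Prop :=
  Measurable μ ∧ (∀ θ : Eu n, ‖θ‖ = 1 → μ θ ∈ Set.Icc lam Lam) ∧ ∀ θ : Eu n, μ (-θ) = μ θ

/-- The integrand `(u(x+y) + u(x−y) − 2u(x)) μ(y/|y|) |y|^{−(n+2s)}`. -/
def kernIntegrand (n : ℕ) (s : ℝ) (μ u : Eu n → ℝ) (x y : Eu n) : ℝ :=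
  (u (x + y) + u (x - y) - 2 * u x) * μ (‖y‖⁻¹ • y) / ‖y‖ ^ ((n : ℝ) + 2 * s)

/-- The linear nonlocal operator `L_μ u(x)`. -/
def Lop (n : ℕ) (s : ℝ) (μ u : Eu n → ℝ) (x : Eu n) : ℝ :=
  (1 - s) * ∫ y, kernIntegrand n s μ u x y

/-- The Pucci extremal operator `𝓜⁺`. -/
def PucciSup (n : ℕ) (s lam Lam : ℝ) (u : Eu n → ℝ) (x : Eu n) : ℝ :=
  ⨆ μ : {μ : Eu n → ℝ // IsAdmissibleKernel n lam Lam μ}, Lop n s μ.1 u x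

/-- The Pucci extremal operator `𝓜⁻`. -/
def PucciInf (n : ℕ) (s lam Lam : ℝ) (u : Eu n → ℝ) (x : Eu n) : ℝ :=
  ⨅ μ : {μ : Eu n → ℝ // IsAdmissibleKernel n lam Lam μ}, Lop n s μ.1 u x

/-- Membership in `L¹_s(ℝⁿ)`. -/
def MemL1s (n : ℕ) (s : ℝ) (u : Eu n → ℝ) : Prop :=
  Integrable (fun x : Eu n => |u x| / (1 + ‖x‖ ^ ((n : ℝ) + 2 * s)))

/-- The weighted norm `‖u‖_{L¹_s(ℝⁿ)}`. -/
def L1sNorm (n : ℕ) (s : ℝ) (u : Eu n → ℝ) : ℝ :=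
  ∫ x : Eu n, |u x| / (1 + ‖x‖ ^ ((n : ℝ) + 2 * s))

/-- Viscosity supersolution `𝓜⁻[u] ≤ g` in `Ω` (the function `g` may incorporate
zeroth-order terms evaluated at `(x, u(x))`): every `C²` test function in `L¹_s`
touching `u` from below at a point of `Ω` satisfies `𝓜⁻[φ](x) ≤ g(x)`. -/
def ViscSupersol (n : ℕ) (s lam Lam : ℝ) (Ω : Set (Eu n)) (u g : Eu n → ℝ) : Prop :=
  ∀ x ∈ Ω, ∀ φ : Eu n → ℝ, MemL1s n s φ → ContDiffAt ℝ 2 φ x →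
    φ x = u x → (∀ y, φ y ≤ u y) → PucciInf n s lam Lam φ x ≤ g x

/-- Viscosity subsolution `𝓜⁻[u] ≥ g` in `Ω`. -/
def ViscSubsol (n : ℕ) (s lam Lam : ℝ) (Ω : Set (Eu n)) (u g : Eu n → ℝ) : Prop :=
  ∀ x ∈ Ω, ∀ φ : Eu n → ℝ, MemL1s n s φ → ContDiffAt ℝ 2 φ x →
    φ x = u x → (∀ y, u y ≤ φ y) → g x ≤ PucciInf n s lam Lam φ x

set_option maxHeartbeats 2000000 in
/-- Proposition 3.3 (Strong Maximum Principle): a nonnegative lower semicontinuous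
viscosity supersolution of `𝓜⁻[u] + Vu ≤ 0` in a connected open set `Ω` is either
positive everywhere in `Ω` or identically zero in `Ω`. -/
theorem stmt6 (n : ℕ) (hn : 1 ≤ n) (s lam Lam : ℝ) (hs : s ∈ Set.Ioo (0:ℝ) 1)
    (hlam : 0 < lam) (hlamLam : lam ≤ Lam)
    (Ω : Set (Eu n)) (hΩo : IsOpen Ω) (hΩconn : IsConnected Ω)
    (V : Eu n → ℝ) (hVloc : ∀ K ⊆ Ω, IsCompact K → IntegrableOn V K)
    (hVminus : ∃ K : ℝ, ∀ x ∈ Ω, max (-V x) 0 ≤ K)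
    (u : Eu n → ℝ) (hlsc : LowerSemicontinuous u) (huL1 : MemL1s n s u)
    (hnonneg : ∀ x : Eu n, 0 ≤ u x)
    (hsuper : ViscSupersol n s lam Lam Ω u (fun x => -(V x * u x))) :
    (∀ x ∈ Ω, 0 < u x) ∨ (∀ x ∈ Ω, u x = 0) := by
  classical
  obtain ⟨hs0, hs1⟩ := hs
  have hLam : 0 < Lam := lt_of_lt_of_le hlam hlamLam
  haveI hNE : Nonempty {μ : Eu n → ℝ // IsAdmissibleKernel n lam Lam μ} :=
    ⟨⟨fun _ => lam, measurable_const, fun θ _ => ⟨le_rfl, hlamLam⟩, fun _ => rfl⟩⟩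
  by_cases hz : ∃ x ∈ Ω, u x = 0
  · right
    obtain ⟨x₀, hx₀Ω, hx₀⟩ := hz
    intro z hzΩ
    by_contra huz
    have hupos : 0 < u z := lt_of_le_of_ne (hnonneg z) (Ne.symm huz)
    have hzne : z ≠ x₀ := by rintro rfl; exact huz hx₀
    set δ : ℝ := u z / 2 with hδdef
    have hδ : 0 < δ := by positivity
    set d : ℝ := dist z x₀ with hddef
    have hd : 0 < d := dist_pos.2 hzne
    have hlz : ∀ᶠ y in nhds z, δ < u y := hlsc z δ (by simpa [hδdef] using half_lt_self hupos)
    rw [Metric.eventually_nhds_iff] at hlz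
    obtain ⟨r₀, hr₀, hball⟩ := hlz
    set r : ℝ := min (r₀ / 2) (d / 4) with hrdef
    have hr : 0 < r := lt_min (by linarith) (by linarith)
    have hrr₀ : r ≤ r₀ := le_trans (min_le_left _ _) (by linarith)
    have hrd : 4 * r ≤ d := by
      have := min_le_right (r₀ / 2) (d / 4); rw [hrdef]; linarith
    set bump : ContDiffBump z := ⟨r / 2, r, by positivity, by linarith⟩ with hbdef
    have hbIn : bump.rIn = r / 2 := rfl
    have hbOut : bump.rOut = r := rfl
    set φ : Eu n → ℝ := fun y => δ * bump y with hφdef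
    have hφnn : ∀ y, 0 ≤ φ y := fun y => mul_nonneg hδ.le bump.nonneg
    have hφδ : ∀ y, φ y ≤ δ := fun y => by
      have := bump.le_one (x := y)
      calc δ * bump y ≤ δ * 1 := by nlinarith
        _ = δ := mul_one δ
    have hφsupp : ∀ y, y ∉ ball z r → φ y = 0 := by
      intro y hy
      have : bump y = 0 := by
        by_contra h
        exact hy (by rw [← hbOut, ← bump.support_eq]; exact h)
      simp [hφdef, this]
    have hφu : ∀ y, φ y ≤ u y := by
      intro y
      by_cases hy : y ∈ ball z r
      · have : δ < u y := hball (by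
          have := mem_ball.1 hy; exact lt_of_lt_of_le this hrr₀)
        exact le_of_lt (lt_of_le_of_lt (hφδ y) this)
      · rw [hφsupp y hy]; exact hnonneg y
    have hx₀r : x₀ ∉ ball z r := by
      intro h
      have : d < r := by rw [hddef, dist_comm]; exact mem_ball.1 h
      linarith
    have hφx₀ : φ x₀ = 0 := hφsupp x₀ hx₀r
    have hφcont : Continuous φ := continuous_const.mul bump.continuous
    set p : ℝ := (n : ℝ) + 2 * s with hpdef
    have hp : 0 < p := by positivity
    -- helper integrability
    have key_int : ∀ (f : Eu n → ℝ) (S : Set (Eu n)) (M : ℝ), MeasurableSet S →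
        volume S < ⊤ → AEStronglyMeasurable f volume →
        (∀ y, ‖f y‖ ≤ S.indicator (fun _ => M) y) → Integrable f := by
      intro f S M hS hSfin hmeas hb
      exact Integrable.mono'
        ((integrable_indicator_iff hS).2 (integrableOn_const hSfin.ne))
        hmeas (Eventually.of_forall hb)
    -- MemL1s φ
    have hφL1 : MemL1s n s φ := by
      apply key_int _ (closedBall z r) δ measurableSet_closedBall measure_closedBall_lt_top
      · apply Measurable.aestronglyMeasurable
        exact (hφcont.abs.measurable).div (by fun_prop)
      · intro y
        have hden : (1:ℝ) ≤ 1 + ‖y‖ ^ ((n : ℝ) + 2 * s) := by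
          have : (0:ℝ) ≤ ‖y‖ ^ ((n : ℝ) + 2 * s) := Real.rpow_nonneg (norm_nonneg y) _
          linarith
        have hnn : 0 ≤ |φ y| / (1 + ‖y‖ ^ ((n : ℝ) + 2 * s)) :=
          div_nonneg (abs_nonneg _) (by linarith)
        rw [Real.norm_eq_abs, abs_of_nonneg hnn]
        by_cases hy : y ∈ closedBall z r
        · rw [Set.indicator_of_mem hy]
          calc |φ y| / (1 + ‖y‖ ^ ((n:ℝ) + 2*s)) ≤ |φ y| := div_le_self (abs_nonneg _) hden
            _ = φ y := abs_of_nonneg (hφnn y)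
            _ ≤ δ := hφδ y
        · rw [Set.indicator_of_notMem hy]
          have : φ y = 0 := hφsupp y (fun h => hy (ball_subset_closedBall h))
          simp [this]
    have hφC2 : ContDiffAt ℝ 2 φ x₀ := by
      exact (contDiff_const.mul (bump.contDiff (n := 2))).contDiffAt
    have hφtouch : φ x₀ = u x₀ := by rw [hφx₀, hx₀]
    have hupper := hsuper x₀ hx₀Ω φ hφL1 hφC2 hφtouch hφu
    have hPle0 : PucciInf n s lam Lam φ x₀ ≤ 0 := by
      simpa [hx₀] using hupper
    -- lower bound
    set ρ : ℝ := d / 2 with hρdef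
    have hρ : 0 < ρ := by positivity
    have hρp : 0 < ρ ^ p := Real.rpow_pos_of_pos hρ p
    -- facts about supports
    have hdzx : ‖z - x₀‖ = d := by rw [hddef, dist_eq_norm]
    have hdxz : ‖x₀ - z‖ = d := by rw [hddef, dist_eq_norm, norm_sub_rev]
    have hplus : ∀ y : Eu n, φ (x₀ + y) ≠ 0 → y ∈ ball (z - x₀) r := by
      intro y hy
      have : x₀ + y ∈ ball z r := by
        by_contra h; exact hy (hφsupp _ h)
      rw [mem_ball, dist_eq_norm] at this ⊢
      have : ‖y - (z - x₀)‖ < r := by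
        rw [show y - (z - x₀) = x₀ + y - z by abel]; exact this
      exact this
    have hminus : ∀ y : Eu n, φ (x₀ - y) ≠ 0 → y ∈ ball (x₀ - z) r := by
      intro y hy
      have h1 : x₀ - y ∈ ball z r := by
        by_contra h; exact hy (hφsupp _ h)
      rw [mem_ball, dist_eq_norm] at h1 ⊢
      have : ‖y - (x₀ - z)‖ < r := by
        rw [← norm_neg, show -(y - (x₀ - z)) = x₀ - y - z by abel]; exact h1
      exact this
    have hfar : ∀ (c : Eu n), ‖c‖ = d → ∀ y ∈ ball c r, ρ ≤ ‖y‖ := by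
      intro c hc y hy
      rw [mem_ball, dist_eq_norm] at hy
      have h1 : ‖c‖ - ‖y - c‖ ≤ ‖y‖ := by
        have := norm_sub_norm_le y c
        have h2 : ‖c‖ - ‖y‖ ≤ ‖y - c‖ := by
          have := norm_sub_norm_le c y
          rwa [norm_sub_rev] at this
        linarith
      rw [hc] at h1
      rw [hρdef]; linarith
    have hnormpow : ∀ y : Eu n, ρ ≤ ‖y‖ → ρ ^ p ≤ ‖y‖ ^ p := fun y hy =>
      Real.rpow_le_rpow hρ.le hy hp.le
    -- g
    set g : Eu n → ℝ := fun y => lam * φ (x₀ + y) / ‖y‖ ^ p with hgdef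
    have hgnn : ∀ y, 0 ≤ g y := fun y =>
      div_nonneg (mul_nonneg hlam.le (hφnn _)) (Real.rpow_nonneg (norm_nonneg y) p)
    have hgmeas : AEStronglyMeasurable g volume := by
      apply Measurable.aestronglyMeasurable
      exact ((continuous_const.mul (hφcont.comp (continuous_const.add continuous_id))).measurable).div
        (by fun_prop)
    have hgint : Integrable g := by
      apply key_int _ (ball (z - x₀) r) (lam * δ / ρ ^ p) measurableSet_ball
        measure_ball_lt_top hgmeas
      intro y
      by_cases hy : φ (x₀ + y) = 0
      · have hg0 : g y = 0 := by simp [hgdef, hy]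
        rw [hg0, norm_zero]
        exact Set.indicator_nonneg (fun _ _ => by positivity) y
      · have hyS := hplus y hy
        rw [Set.indicator_of_mem hyS]
        have hyρ : ρ ≤ ‖y‖ := hfar (z - x₀) hdzx y hyS
        rw [Real.norm_eq_abs, abs_of_nonneg (hgnn y)]
        apply div_le_div₀ (by positivity)
          (by nlinarith [hφδ (x₀ + y), hφnn (x₀ + y)]) hρp (hnormpow y hyρ)
    have hgpos : 0 < ∫ y, g y := by
      rw [integral_pos_iff_support_of_nonneg hgnn hgint]
      have hsub : ball (z - x₀) (r / 2) ⊆ Function.support g := by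
        intro y hy
        have hyc : x₀ + y ∈ closedBall z (r / 2) := by
          rw [mem_closedBall, dist_eq_norm]
          rw [mem_ball, dist_eq_norm] at hy
          have : ‖x₀ + y - z‖ = ‖y - (z - x₀)‖ := by congr 1; abel
          rw [this]; linarith [hy.le]
        have hb1 : bump (x₀ + y) = 1 := bump.one_of_mem_closedBall hyc
        have hφval : φ (x₀ + y) = δ := by rw [hφdef]; simp [hb1]
        have hyρ : ρ ≤ ‖y‖ := by
          apply hfar (z - x₀) hdzx y
          exact ball_subset_ball (by linarith) hy
        have hynorm : 0 < ‖y‖ := lt_of_lt_of_le hρ hyρ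
        have : 0 < g y := by
          have hyp : 0 < ‖y‖ ^ p := Real.rpow_pos_of_pos hynorm p
          show 0 < lam * φ (x₀ + y) / ‖y‖ ^ p
          rw [hφval]
          positivity
        exact this.ne'
      calc (0:ENNReal) < volume (ball (z - x₀) (r / 2)) := measure_ball_pos _ _ (by positivity)
        _ ≤ volume (Function.support g) := measure_mono hsub
    -- lower bound for each kernel
    have hLop : ∀ μ : {μ : Eu n → ℝ // IsAdmissibleKernel n lam Lam μ},
        (1 - s) * ∫ y, g y ≤ Lop n s μ.1 φ x₀ := by
      rintro ⟨μ, hμmeas, hμIcc, hμeven⟩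
      have hunit : ∀ y : Eu n, y ≠ 0 → ‖‖y‖⁻¹ • y‖ = 1 := by
        intro y hy
        rw [norm_smul, norm_inv, norm_norm, inv_mul_cancel₀ (norm_ne_zero_iff.2 hy)]
      have hμb : ∀ y : Eu n, y ≠ 0 → lam ≤ μ (‖y‖⁻¹ • y) ∧ μ (‖y‖⁻¹ • y) ≤ Lam := by
        intro y hy
        have := hμIcc _ (hunit y hy)
        exact ⟨this.1, this.2⟩
      set I : Eu n → ℝ := fun y => kernIntegrand n s μ φ x₀ y with hIdef
      have hInum : ∀ y, I y = (φ (x₀ + y) + φ (x₀ - y)) * μ (‖y‖⁻¹ • y) / ‖y‖ ^ p := by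
        intro y
        rw [hIdef]; unfold kernIntegrand
        rw [hφx₀, hpdef]; ring_nf
      have hImeas : AEStronglyMeasurable I volume := by
        apply Measurable.aestronglyMeasurable
        have h1 : Measurable fun y : Eu n => φ (x₀ + y) + φ (x₀ - y) - 2 * φ x₀ := by
          apply Measurable.sub _ measurable_const
          exact ((hφcont.comp (continuous_const.add continuous_id)).measurable).add
            ((hφcont.comp (continuous_const.sub continuous_id)).measurable)
        have h2 : Measurable fun y : Eu n => μ (‖y‖⁻¹ • y) :=
          hμmeas.comp (by fun_prop : Measurable fun y : Eu n => ‖y‖⁻¹ • y)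
        exact (h1.mul h2).div (by fun_prop)
      have hIint : Integrable I := by
        apply key_int _ (ball (z - x₀) r ∪ ball (x₀ - z) r) (2 * δ * Lam / ρ ^ p)
          (measurableSet_ball.union measurableSet_ball)
          (lt_of_le_of_lt (measure_union_le _ _)
            (ENNReal.add_lt_top.2 ⟨measure_ball_lt_top, measure_ball_lt_top⟩)) hImeas
        intro y
        by_cases hy : φ (x₀ + y) = 0 ∧ φ (x₀ - y) = 0
        · have : I y = 0 := by
            rw [hInum, hy.1, hy.2]; simp
          rw [this, norm_zero]
          exact Set.indicator_nonneg (fun _ _ => by positivity) y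
        · have hyS : y ∈ ball (z - x₀) r ∪ ball (x₀ - z) r := by
            rcases not_and_or.1 hy with h | h
            · exact Or.inl (hplus y h)
            · exact Or.inr (hminus y h)
          rw [Set.indicator_of_mem hyS]
          have hyρ : ρ ≤ ‖y‖ := by
            rcases hyS with h | h
            · exact hfar _ hdzx y h
            · exact hfar _ hdxz y h
          have hy0 : y ≠ 0 := by
            intro h; rw [h, norm_zero] at hyρ; linarith
          obtain ⟨hm1, hm2⟩ := hμb y hy0
          have hmnn : 0 ≤ μ (‖y‖⁻¹ • y) := le_trans hlam.le hm1
          have hnum : 0 ≤ (φ (x₀ + y) + φ (x₀ - y)) * μ (‖y‖⁻¹ • y) :=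
            mul_nonneg (add_nonneg (hφnn _) (hφnn _)) hmnn
          rw [hInum, Real.norm_eq_abs,
            abs_of_nonneg (div_nonneg hnum (Real.rpow_nonneg (norm_nonneg y) p))]
          apply div_le_div₀ (by positivity)
            (by nlinarith [hφδ (x₀ + y), hφδ (x₀ - y), hφnn (x₀ + y), hφnn (x₀ - y)])
            hρp (hnormpow y hyρ)
      have hle : ∀ y, g y ≤ I y := by
        intro y
        by_cases hy : y = 0
        · subst hy
          have : φ (x₀ + 0) = 0 := by simpa using hφx₀
          rw [hgdef, hInum]
          simp [this, hφx₀]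
        · obtain ⟨hm1, hm2⟩ := hμb y hy
          rw [hgdef, hInum]
          have hD : 0 < ‖y‖ ^ p :=
            Real.rpow_pos_of_pos (norm_pos_iff.2 hy) p
          apply (div_le_div_iff_of_pos_right hD).2
          have hA := hφnn (x₀ + y)
          have hB := hφnn (x₀ - y)
          nlinarith
      have : ∫ y, g y ≤ ∫ y, I y := integral_mono hgint hIint hle
      rw [Lop]
      exact mul_le_mul_of_nonneg_left this (by linarith)
    have hPge : (1 - s) * ∫ y, g y ≤ PucciInf n s lam Lam φ x₀ := le_ciInf hLop
    have : 0 < (1 - s) * ∫ y, g y := mul_pos (by linarith) hgpos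
    linarith
  · left
    intro x hx
    exact lt_of_le_of_ne (hnonneg x) fun h => hz ⟨x, hx, h.symm⟩
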